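/- Let (Ω, 𝔽, P) be a probability space, let c* ∈ ℝ, and let (c_k)_{k≥1} be real-valued random variables such that almost surely c* ≤ c_{k+1} ≤ c_k for all k ≥ 1. Suppose that for every ε > 0 there exists p > 0 such that for every k ≥ 1, P({c_k ≤ c* + ε} ∩ Z_{k−1}) ≥ p · P(Z_{k−1}), where Z₀ = Ω and Z_{k−1} = {c₁ > c* + ε} ∩ ⋯ ∩ {c_{k−1} > c* + ε} for k ≥ 2. Then c_k converges to c* almost surely as k → ∞. -/

import Mathlib

open MeasureTheory
open scoped ENNReal

/-- Probabilistic skeleton of Theorem 2: incumbent costs `c_k` never increase, stay above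
`c*`, and in each iteration, conditioned on never yet having come within `ε` of `c*`
(the event `Z_{k−1}`), a solution of cost at most `c* + ε` is produced with probability
at least `p > 0`. Then `c_k → c*` almost surely. -/
theorem stmt_11 (Ω : Type*) [MeasurableSpace Ω] (P : Measure Ω) [IsProbabilityMeasure P]
    (cstar : ℝ) (c : ℕ → Ω → ℝ) (hcmeas : ∀ k, Measurable (c k))
    (hmono : ∀ᵐ ω ∂P, ∀ k : ℕ, 1 ≤ k → cstar ≤ c (k + 1) ω ∧ c (k + 1) ω ≤ c k ω)
    (h : ∀ ε : ℝ, 0 < ε → ∃ p : ℝ≥0∞, 0 < p ∧ ∀ k : ℕ, 1 ≤ k →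
      p * P (⋂ m ∈ Finset.Icc 1 (k - 1), {ω | cstar + ε < c m ω}) ≤
        P ({ω | c k ω ≤ cstar + ε} ∩
          ⋂ m ∈ Finset.Icc 1 (k - 1), {ω | cstar + ε < c m ω})) :
    ∀ᵐ ω ∂P, Filter.Tendsto (fun k => c k ω) Filter.atTop (nhds cstar) := by
  have key : ∀ ε : ℝ, 0 < ε → ∀ᵐ ω ∂P, ∃ m : ℕ, 1 ≤ m ∧ c m ω ≤ cstar + ε := by
    intro ε hε
    obtain ⟨p, hp, hP⟩ := h ε hε
    set Z : ℕ → Set Ω := fun k => ⋂ m ∈ Finset.Icc 1 k, {ω | cstar + ε < c m ω} with hZ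
    have hZm : ∀ k, MeasurableSet (Z k) := fun k =>
      Finset.measurableSet_biInter _ fun m _ =>
        measurableSet_lt measurable_const (hcmeas m)
    have hanti : Antitone Z := by
      intro a b hab ω hω
      simp only [hZ, Set.mem_iInter, Finset.mem_Icc] at hω ⊢
      intro m hm
      exact hω m ⟨hm.1, hm.2.trans hab⟩
    set L := P (⋂ k, Z k) with hL
    have hlim : Filter.Tendsto (fun k => P (Z k)) Filter.atTop (nhds L) :=
      tendsto_measure_iInter_atTop (fun k => (hZm k).nullMeasurableSet) hanti
        ⟨0, measure_ne_top P _⟩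
    -- step inequality: for k ≥ 1, p*L + P (Z k) ≤ P (Z (k-1))
    have hstep : ∀ k : ℕ, 1 ≤ k → p * L + P (Z k) ≤ P (Z (k - 1)) := by
      intro k hk
      have hdecomp : P (Z (k - 1) ∩ {ω | c k ω ≤ cstar + ε}) + P (Z (k - 1) \ {ω | c k ω ≤ cstar + ε}) = P (Z (k - 1)) :=
        measure_inter_add_diff _ (measurableSet_le (hcmeas k) measurable_const)
      have hZk : Z (k - 1) \ {ω | c k ω ≤ cstar + ε} = Z k := by
        ext ω
        simp only [hZ, Set.mem_diff, Set.mem_iInter, Finset.mem_Icc, Set.mem_setOf_eq, not_le]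
        constructor
        · rintro ⟨h1, h2⟩ m ⟨hm1, hm2⟩
          rcases eq_or_lt_of_le hm2 with rfl | hlt
          · exact h2
          · exact h1 m ⟨hm1, by omega⟩
        · intro h1
          exact ⟨fun m hm => h1 m ⟨hm.1, by omega⟩, h1 k ⟨hk, le_rfl⟩⟩
      have h1 : p * L ≤ P (Z (k - 1) ∩ {ω | c k ω ≤ cstar + ε}) := by
        calc p * L ≤ p * P (Z (k - 1)) := by
              gcongr
              exact measure_mono (Set.iInter_subset _ _)
          _ ≤ P ({ω | c k ω ≤ cstar + ε} ∩ Z (k - 1)) := hP k hk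
          _ = P (Z (k - 1) ∩ {ω | c k ω ≤ cstar + ε}) := by rw [Set.inter_comm]
      calc p * L + P (Z k)
          ≤ P (Z (k - 1) ∩ {ω | c k ω ≤ cstar + ε}) + P (Z (k - 1) \ {ω | c k ω ≤ cstar + ε}) := by
            rw [hZk]; exact add_le_add_left h1 _
        _ = P (Z (k - 1)) := hdecomp
    have hL0 : L = 0 := by
      have t1 : Filter.Tendsto (fun k : ℕ => p * L + P (Z k)) Filter.atTop (nhds (p * L + L)) :=
        Filter.Tendsto.const_add _ hlim
      have t2 : Filter.Tendsto (fun k : ℕ => P (Z (k - 1))) Filter.atTop (nhds L) :=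
        hlim.comp (Filter.tendsto_sub_atTop_nat 1)
      have hle : p * L + L ≤ L :=
        le_of_tendsto_of_tendsto t1 t2
          (Filter.eventually_atTop.mpr ⟨1, fun k hk => hstep k hk⟩)
      have hle' : p * L ≤ 0 := by
        have : p * L + L ≤ 0 + L := by simpa using hle
        exact (ENNReal.add_le_add_iff_right (by simp [hL, measure_ne_top])).mp this
      have : p * L = 0 := le_antisymm hle' bot_le
      rcases mul_eq_zero.mp this with h' | h'
      · exact absurd h' hp.ne'
      · exact h'
    rw [ae_iff]
    refine measure_mono_null ?_ hL0
    intro ω hω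
    simp only [Set.mem_setOf_eq, not_exists, not_and, not_le] at hω
    simp only [hZ, Set.mem_iInter, Set.mem_setOf_eq, Finset.mem_Icc]
    intro k m hm
    exact hω m hm.1
  have key2 : ∀ᵐ ω ∂P, ∀ n : ℕ, ∃ m : ℕ, 1 ≤ m ∧ c m ω ≤ cstar + 1 / (n + 1) :=
    ae_all_iff.mpr fun n => key _ (by positivity)
  filter_upwards [key2, hmono] with ω h1 h2
  have hchain : ∀ m k : ℕ, 1 ≤ m → m ≤ k → c k ω ≤ c m ω := by
    intro m k hm hmk
    induction k with
    | zero => omega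
    | succ k ih =>
      rcases Nat.lt_or_ge m (k + 1) with hlt | hge
      · exact le_trans (h2 k (by omega)).2 (ih (by omega))
      · have : m = k + 1 := by omega
        subst this; exact le_rfl
  rw [Metric.tendsto_atTop]
  intro ε hε
  obtain ⟨n, hn⟩ := exists_nat_one_div_lt hε
  obtain ⟨m, hm1, hm2⟩ := h1 n
  refine ⟨m + 1, fun k hk => ?_⟩
  have hub : c k ω < cstar + ε :=
    lt_of_le_of_lt (le_trans (hchain m k hm1 (by omega)) hm2) (by linarith)
  have hlb : cstar ≤ c k ω := by
    have hk2 : 2 ≤ k := by omega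
    have := (h2 (k - 1) (by omega)).1
    rwa [Nat.sub_add_cancel (by omega)] at this
  rw [Real.dist_eq, abs_lt]
  constructor <;> linarith
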